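/- Let M be a matroid on ground set E with a standard representation A = (I_r | A₀) over a field F, and let A' be the E×E symmetric matrix with block form [[0, A₀],[A₀ᵀ, 0]]. Then for every subset X ⊆ E, the matroid connectivity λ_M(X) equals the cut-rank of X in A', i.e., λ_M(X) = rank(A'[X, E∖X]). -/

import Mathlib

/-- A branch-decomposition of a ground set `E`: a subcubic tree together with a
bijection from `E` to the leaves of the tree. -/
structure BranchDecomp (E : Type*) where
  V : Type
  [fV : Fintype V]
  G : SimpleGraph V
  [dA : DecidableRel G.Adj]
  isTree : G.IsTree
  subcubic : ∀ v : V, G.degree v = 1 ∨ G.degree v = 3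
  L : E ≃ {v : V // G.degree v = 1}

attribute [instance] BranchDecomp.fV BranchDecomp.dA

/-- The side of the edge `{u,v}` containing `u`: those elements of `E` whose leaf is
reachable from `u` after deleting the edge. -/
def BranchDecomp.side {E : Type*} (D : BranchDecomp E) (u v : D.V) : Set E :=
  {x : E | (D.G.deleteEdges {s(u, v)}).Reachable u (D.L x).1}

/-- The width of a branch-decomposition with respect to a set function `lam`. -/
noncomputable def BranchDecomp.width {E : Type*} (D : BranchDecomp E)
    (lam : Set E → ℕ) : ℕ :=
  Finset.sup (Finset.univ.filter fun p : D.V × D.V => D.G.Adj p.1 p.2)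
    (fun p => lam (D.side p.1 p.2))

/-- The branch-width of a set function `lam : Set E → ℕ`. -/
noncomputable def branchWidth {E : Type*} (lam : Set E → ℕ) : ℕ :=
  if Nat.card E ≤ 1 then 0
  else sInf {w | ∃ D : BranchDecomp E, D.width lam = w}

/-- The path-width of a set function `lam : Set E → ℕ` : the minimum over linear layouts
of the maximum of `lam` on proper prefixes. -/
noncomputable def pathWidth (E : Type*) [Fintype E] (lam : Set E → ℕ) : ℕ :=
  if Fintype.card E ≤ 1 then 0
  else sInf {w | ∃ f : Fin (Fintype.card E) ≃ E,
    (Finset.sup (Finset.univ.filter fun i : Fin (Fintype.card E) =>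
        (i : ℕ) < Fintype.card E - 1)
      (fun i => lam {x | f.symm x ≤ i})) = w}

/-- `lam` is a connectivity function: symmetric, submodular, zero on the empty set. -/
structure IsConnFn {E : Type*} (lam : Set E → ℕ) : Prop where
  symm : ∀ X, lam X = lam Xᶜ
  submod : ∀ X Y, lam (X ∩ Y) + lam (X ∪ Y) ≤ lam X + lam Y
  empty : lam ∅ = 0

/-- The rank of the set `X` of columns of the matrix `A`. -/
noncomputable def colRank {m E F : Type*} [Fintype m] [Field F]
    (A : Matrix m E F) (X : Set E) : ℕ :=
  Module.finrank F (Submodule.span F (Matrix.transpose A '' X))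

/-- The connectivity function of the matroid represented by the columns of `A`. -/
noncomputable def matLam {m E F : Type*} [Fintype m] [Field F]
    (A : Matrix m E F) (X : Set E) : ℕ :=
  colRank A X + colRank A Xᶜ - colRank A Set.univ

/-- The branch-width of the matroid represented by the columns of `A`. -/
noncomputable def matBW {m E F : Type*} [Fintype m] [Field F]
    (A : Matrix m E F) : ℕ :=
  branchWidth (matLam A)

/-- A matrix represents a simple matroid iff it has no zero column and no two
distinct columns are linearly dependent. -/
def SimpleRep {m n F : Type*} [Field F] (A : Matrix m n F) : Prop :=
  (∀ j, Matrix.transpose A j ≠ 0) ∧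
    ∀ j j' : n, j ≠ j' → ∀ c : F, Matrix.transpose A j ≠ c • Matrix.transpose A j'

open scoped Classical in
/-- The cut-rank of a set `X` for a square matrix `A`: the rank of the submatrix with
rows in `X` and columns in the complement of `X`. -/
noncomputable def cutRank {E F : Type*} [Fintype E] [Field F]
    (A : Matrix E E F) (X : Set E) : ℕ :=
  (A.submatrix (fun x : X => (x : E)) (fun y : ↥Xᶜ => (y : E))).rank


open Matrix

section Helpers
variable {F : Type*} [Field F]

lemma finrank_submodule_prod {V W : Type*} [AddCommGroup V] [AddCommGroup W]
    [Module F V] [Module F W] [FiniteDimensional F V] [FiniteDimensional F W]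
    (p : Submodule F V) (q : Submodule F W) :
    Module.finrank F (p.prod q) = Module.finrank F p + Module.finrank F q := by
  have e : (p.prod q) ≃ₗ[F] p × q :=
    { toFun := fun x => (⟨x.1.1, x.2.1⟩, ⟨x.1.2, x.2.2⟩)
      invFun := fun y => ⟨(y.1.1, y.2.1), ⟨y.1.2, y.2.2⟩⟩
      map_add' := fun _ _ => rfl
      map_smul' := fun _ _ => rfl
      left_inv := fun _ => rfl
      right_inv := fun _ => rfl }
  rw [e.finrank_eq, Module.finrank_prod]

lemma range_prodMap' {V₁ V₂ W₁ W₂ : Type*} [AddCommGroup V₁] [AddCommGroup V₂]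
    [AddCommGroup W₁] [AddCommGroup W₂] [Module F V₁] [Module F V₂] [Module F W₁]
    [Module F W₂] (f : V₁ →ₗ[F] W₁) (g : V₂ →ₗ[F] W₂) :
    LinearMap.range (f.prodMap g) = (LinearMap.range f).prod (LinearMap.range g) := by
  ext ⟨x1, x2⟩
  constructor
  · rintro ⟨y, hy⟩
    rw [LinearMap.prodMap_apply, Prod.mk.injEq] at hy
    exact ⟨⟨y.1, hy.1⟩, ⟨y.2, hy.2⟩⟩
  · rintro ⟨⟨u, hu⟩, ⟨v, hv⟩⟩
    exact ⟨(u, v), Prod.ext hu hv⟩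

lemma rank_submatrix'' {m n m' n' : Type*} [Fintype n] [Fintype n']
    (A : Matrix m n F) (e₁ : m' ≃ m) (e₂ : n' ≃ n) :
    (A.submatrix e₁ e₂).rank = A.rank := by
  rw [show (A.submatrix (e₁ : m' → m) (e₂ : n' → n)) = Matrix.reindex e₁.symm e₂.symm A from rfl,
    Matrix.rank, Matrix.rank, Matrix.mulVecLin_reindex, LinearMap.range_comp,
    LinearMap.range_comp, LinearEquiv.range, Submodule.map_top, LinearEquiv.finrank_map_eq]

lemma rank_fromBlocks_diag {m n p q : Type*} [Fintype m] [Fintype n] [Fintype p] [Fintype q]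
    (B : Matrix m n F) (C : Matrix p q F) :
    (Matrix.fromBlocks B 0 0 C).rank = B.rank + C.rank := by
  have key : (Matrix.fromBlocks B 0 0 C).mulVecLin =
      (((LinearEquiv.sumArrowLequivProdArrow m p F F).symm :
          ((m → F) × (p → F)) ≃ₗ[F] (m ⊕ p → F)) :
            ((m → F) × (p → F)) →ₗ[F] (m ⊕ p → F)) ∘ₗ
        ((B.mulVecLin.prodMap C.mulVecLin) ∘ₗ
          ((LinearEquiv.sumArrowLequivProdArrow n q F F :
            (n ⊕ q → F) ≃ₗ[F] ((n → F) × (q → F))) :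
              (n ⊕ q → F) →ₗ[F] ((n → F) × (q → F)))) := by
    apply LinearMap.ext
    intro x
    funext i
    cases i with
    | inl i =>
        simp [Matrix.mulVecLin_apply, Matrix.mulVec, dotProduct, Fintype.sum_sum_type,
          LinearEquiv.sumArrowLequivProdArrow, Equiv.sumArrowEquivProdArrow]
    | inr i =>
        simp [Matrix.mulVecLin_apply, Matrix.mulVec, dotProduct, Fintype.sum_sum_type,
          LinearEquiv.sumArrowLequivProdArrow, Equiv.sumArrowEquivProdArrow]
  rw [Matrix.rank, key, LinearMap.range_comp, LinearMap.range_comp, LinearEquiv.range,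
    Submodule.map_top, LinearEquiv.finrank_map_eq, range_prodMap', finrank_submodule_prod]
  rfl

lemma rank_fromBlocks_upper {m p q : Type*} [Fintype m] [Fintype p] [Fintype q]
    [DecidableEq m] [DecidableEq q]
    (B : Matrix m q F) (C : Matrix p q F) :
    (Matrix.fromBlocks (1 : Matrix m m F) B 0 C).rank = Fintype.card m + C.rank := by
  have hprod : Matrix.fromBlocks (1 : Matrix m m F) B 0 C =
      (Matrix.fromBlocks (1 : Matrix m m F) 0 0 C : Matrix (m ⊕ p) (m ⊕ q) F) *
        (Matrix.fromBlocks 1 B 0 1 : Matrix (m ⊕ q) (m ⊕ q) F) := by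
    rw [Matrix.fromBlocks_multiply]
    simp
  have hdet : IsUnit (Matrix.fromBlocks (1 : Matrix m m F) B 0 (1 : Matrix q q F)).det := by
    rw [Matrix.det_fromBlocks_zero₂₁]
    simp
  rw [hprod, Matrix.rank_mul_eq_left_of_isUnit_det _ _ hdet, rank_fromBlocks_diag,
    Matrix.rank_one]

lemma rank_fromBlocks_offdiag {m n p q : Type*} [Fintype m] [Fintype n] [Fintype p] [Fintype q]
    (B : Matrix m q F) (C : Matrix p n F) :
    (Matrix.fromBlocks (0 : Matrix m n F) B C (0 : Matrix p q F)).rank = B.rank + C.rank := by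
  have h : Matrix.fromBlocks (0 : Matrix m n F) B C 0 =
      (Matrix.fromBlocks B 0 0 C).submatrix (Equiv.refl _) (Equiv.sumComm n q) := by
    ext i j
    rcases i with i | i <;> rcases j with j | j <;> rfl
  rw [h, rank_submatrix'', rank_fromBlocks_diag]

end Helpers

section ColRank
variable {F : Type*} [Field F]

/-- The canonical equivalence between a subset of a sum type and the sum of its parts. -/
def sumSubtypeEquivSet {r c : Type*} (X : Set (r ⊕ c)) :
    ({i : r // Sum.inl i ∈ X} ⊕ {j : c // Sum.inr j ∈ X}) ≃ ↥X where
  toFun := Sum.elim (fun i => ⟨Sum.inl i.1, i.2⟩) (fun j => ⟨Sum.inr j.1, j.2⟩)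
  invFun := fun x => match x with
    | ⟨Sum.inl i, h⟩ => Sum.inl ⟨i, h⟩
    | ⟨Sum.inr j, h⟩ => Sum.inr ⟨j, h⟩
  left_inv := by rintro (⟨i, h⟩ | ⟨j, h⟩) <;> rfl
  right_inv := by rintro ⟨i | j, h⟩ <;> rfl

lemma colRank_eq_rank {mm E : Type*} [Fintype mm] [Fintype E]
    (A : Matrix mm E F) (X : Set E) [Fintype ↥X] :
    colRank A X = (A.submatrix id (fun x : ↥X => (x : E))).rank := by
  have him : Matrix.transpose A '' X
      = Set.range (A.submatrix id (fun x : ↥X => (x : E)))ᵀ := by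
    rw [Matrix.transpose_submatrix]
    exact Set.image_eq_range _ _
  rw [colRank, him]
  exact (Matrix.rank_eq_finrank_span_cols _).symm

lemma rank_submatrix_subtype_congr {m n : Type*} (A : Matrix m n F)
    {p p' : m → Prop} {q q' : n → Prop} [Fintype {j // q j}] [Fintype {j // q' j}]
    (hp : ∀ i, p i ↔ p' i) (hq : ∀ j, q j ↔ q' j) :
    (A.submatrix (fun i : {i // p i} => (i : m)) (fun j : {j // q j} => (j : n))).rank
      = (A.submatrix (fun i : {i // p' i} => (i : m))
          (fun j : {j // q' j} => (j : n))).rank := by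
  have h : (A.submatrix (fun i : {i // p i} => (i : m)) (fun j : {j // q j} => (j : n)))
      = (A.submatrix (fun i : {i // p' i} => (i : m))
          (fun j : {j // q' j} => (j : n))).submatrix
        (Equiv.subtypeEquivRight hp) (Equiv.subtypeEquivRight hq) := rfl
  rw [h, rank_submatrix'']

lemma colRank_fromColumns {r c F : Type*} [Fintype r] [Fintype c] [DecidableEq r] [Field F]
    (A0 : Matrix r c F) (X : Set (r ⊕ c)) [Fintype ↥X]
    [Fintype {i : r // Sum.inl i ∈ X}] [Fintype {j : c // Sum.inr j ∈ X}] :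
    colRank (Matrix.fromCols (1 : Matrix r r F) A0) X
      = Fintype.card {i : r // Sum.inl i ∈ X}
        + (A0.submatrix (fun i : {i : r // Sum.inl i ∉ X} => (i : r))
            (fun j : {j : c // Sum.inr j ∈ X} => (j : c))).rank := by
  classical
  rw [colRank_eq_rank]
  rw [← rank_submatrix''
    ((Matrix.fromCols (1 : Matrix r r F) A0).submatrix id (fun x : ↥X => (x : r ⊕ c)))
    (Equiv.sumCompl (fun i : r => Sum.inl i ∈ X)) (sumSubtypeEquivSet X)]
  have hM : ((Matrix.fromCols (1 : Matrix r r F) A0).submatrix id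
        (fun x : ↥X => (x : r ⊕ c))).submatrix
          (Equiv.sumCompl (fun i : r => Sum.inl i ∈ X)) (sumSubtypeEquivSet X)
      = Matrix.fromBlocks 1
          (A0.submatrix (fun i : {i : r // Sum.inl i ∈ X} => (i : r))
            (fun j : {j : c // Sum.inr j ∈ X} => (j : c)))
          0
          (A0.submatrix (fun i : {i : r // ¬ Sum.inl i ∈ X} => (i : r))
            (fun j : {j : c // Sum.inr j ∈ X} => (j : c))) := by
    ext i j
    rcases i with i | i <;> rcases j with j | j
    · simp [sumSubtypeEquivSet, Matrix.one_apply, Subtype.ext_iff]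
    · simp [sumSubtypeEquivSet]
    · have hne : (i : r) ≠ (j : r) := by
        intro h
        exact i.2 (by rw [h]; exact j.2)
      simp [sumSubtypeEquivSet, Matrix.one_apply, hne]
    · simp [sumSubtypeEquivSet]
  rw [hM, rank_fromBlocks_upper]

lemma colRank_univ {r c F : Type*} [Fintype r] [Fintype c] [DecidableEq r] [Field F]
    (A0 : Matrix r c F) :
    colRank (Matrix.fromCols (1 : Matrix r r F) A0) (Set.univ : Set (r ⊕ c))
      = Fintype.card r := by
  classical
  rw [colRank_fromColumns]
  haveI : IsEmpty {i : r // Sum.inl i ∉ (Set.univ : Set (r ⊕ c))} :=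
    ⟨fun x => x.2 (Set.mem_univ _)⟩
  have h0 : (A0.submatrix
      (fun i : {i : r // Sum.inl i ∉ (Set.univ : Set (r ⊕ c))} => (i : r))
      (fun j : {j : c // Sum.inr j ∈ (Set.univ : Set (r ⊕ c))} => (j : c))).rank = 0 := by
    have h := Matrix.rank_le_card_height (A0.submatrix
      (fun i : {i : r // Sum.inl i ∉ (Set.univ : Set (r ⊕ c))} => (i : r))
      (fun j : {j : c // Sum.inr j ∈ (Set.univ : Set (r ⊕ c))} => (j : c)))
    simpa using h
  rw [h0, add_zero]
  exact Fintype.card_congr (Equiv.subtypeUnivEquiv fun i => Set.mem_univ _)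

end ColRank

theorem stmt5 {r c F : Type*} [Fintype r] [Fintype c] [DecidableEq r] [Field F]
    (A0 : Matrix r c F) (X : Set (r ⊕ c)) :
    matLam (Matrix.fromCols (1 : Matrix r r F) A0) X
      = cutRank (Matrix.fromBlocks (0 : Matrix r r F) A0
          (Matrix.transpose A0) (0 : Matrix c c F)) X := by
  classical
  have h1 := colRank_fromColumns A0 X
  have h2 := colRank_fromColumns A0 Xᶜ
  have h3 := colRank_univ A0
  -- bridge the subtype descriptions appearing for `Xᶜ`
  have e2 : (A0.submatrix (fun i : {i : r // Sum.inl i ∉ Xᶜ} => (i : r))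
        (fun j : {j : c // Sum.inr j ∈ Xᶜ} => (j : c))).rank
      = (A0.submatrix (fun i : {i : r // Sum.inl i ∈ X} => (i : r))
          (fun j : {j : c // Sum.inr j ∈ Xᶜ} => (j : c))).rank :=
    rank_submatrix_subtype_congr A0 (fun i => by simp) (fun j => Iff.rfl)
  rw [e2] at h2
  have hcard : Fintype.card {i : r // Sum.inl i ∈ X}
      + Fintype.card {i : r // Sum.inl i ∈ Xᶜ} = Fintype.card r := by
    have hc : Fintype.card {i : r // Sum.inl i ∈ Xᶜ}
        = Fintype.card {i : r // ¬ Sum.inl i ∈ X} :=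
      Fintype.card_congr (Equiv.subtypeEquivRight fun i => Iff.rfl)
    rw [hc, ← Fintype.card_sum]
    exact Fintype.card_congr (Equiv.sumCompl _)
  have hcut : cutRank (Matrix.fromBlocks (0 : Matrix r r F) A0
        (Matrix.transpose A0) (0 : Matrix c c F)) X
      = (A0.submatrix (fun i : {i : r // Sum.inl i ∈ X} => (i : r))
          (fun j : {j : c // Sum.inr j ∈ Xᶜ} => (j : c))).rank
        + (A0.submatrix (fun i : {i : r // Sum.inl i ∉ X} => (i : r))
            (fun j : {j : c // Sum.inr j ∈ X} => (j : c))).rank := by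
    rw [cutRank]
    rw [← rank_submatrix''
      ((Matrix.fromBlocks (0 : Matrix r r F) A0
          (Matrix.transpose A0) (0 : Matrix c c F)).submatrix
        (fun x : ↥X => (x : r ⊕ c)) (fun y : ↥Xᶜ => (y : r ⊕ c)))
      (sumSubtypeEquivSet X) (sumSubtypeEquivSet Xᶜ)]
    have hM : ((Matrix.fromBlocks (0 : Matrix r r F) A0
          (Matrix.transpose A0) (0 : Matrix c c F)).submatrix
            (fun x : ↥X => (x : r ⊕ c)) (fun y : ↥Xᶜ => (y : r ⊕ c))).submatrix
          (sumSubtypeEquivSet X) (sumSubtypeEquivSet Xᶜ)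
        = Matrix.fromBlocks 0
            (A0.submatrix (fun i : {i : r // Sum.inl i ∈ X} => (i : r))
              (fun j : {j : c // Sum.inr j ∈ Xᶜ} => (j : c)))
            ((Matrix.transpose A0).submatrix
              (fun j : {j : c // Sum.inr j ∈ X} => (j : c))
              (fun i : {i : r // Sum.inl i ∈ Xᶜ} => (i : r)))
            0 := by
      ext i j
      rcases i with i | i <;> rcases j with j | j <;>
        simp [sumSubtypeEquivSet]
    rw [hM, rank_fromBlocks_offdiag]
    congr 1
    rw [show (Matrix.transpose A0).submatrix
          (fun j : {j : c // Sum.inr j ∈ X} => (j : c))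
          (fun i : {i : r // Sum.inl i ∈ Xᶜ} => (i : r))
        = (A0.submatrix (fun i : {i : r // Sum.inl i ∈ Xᶜ} => (i : r))
            (fun j : {j : c // Sum.inr j ∈ X} => (j : c)))ᵀ from rfl,
      Matrix.rank_transpose]
    exact rank_submatrix_subtype_congr A0 (fun i => Iff.rfl) (fun j => Iff.rfl)
  rw [matLam, h1, h2, h3, hcut]
  omega
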